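/- Let g : [−θ̄, θ̄] → ℝ be defined by g(θ) = 1 − ((1−cos θ̄)/θ̄²)θ² − cos θ. For 0 < θ̄ ≤ π/2, g(θ) ≥ 0 on [−θ̄, θ̄] with equality exactly at θ ∈ {−θ̄, 0, θ̄}. -/

import Mathlib

open Real

private lemma one_sub_cos_eq (t : ℝ) : 1 - Real.cos t = 2 * Real.sin (t / 2) ^ 2 := by
  have h := Real.sin_sq_eq_half_sub (t / 2)
  have ht : 2 * (t / 2) = t := by ring
  rw [ht] at h
  linarith

private lemma key_lt (θb : ℝ) (hθb0 : 0 < θb) (hθbπ : θb ≤ Real.pi / 2)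
    (t : ℝ) (ht0 : 0 < t) (htb : t < θb) :
    ((1 - Real.cos θb) / θb ^ 2) * t ^ 2 < 1 - Real.cos t := by
  have hpi := Real.pi_pos
  set a : ℝ := t / θb with ha
  have ha0 : 0 < a := div_pos ht0 hθb0
  have ha1 : a < 1 := (div_lt_one hθb0).2 htb
  -- strict concavity of sin on [0, π], at points θb/2 and 0
  have hx : θb / 2 ∈ Set.Icc (0 : ℝ) Real.pi := ⟨by linarith, by linarith⟩
  have hy : (0 : ℝ) ∈ Set.Icc (0 : ℝ) Real.pi := ⟨le_rfl, hpi.le⟩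
  have hne : θb / 2 ≠ (0 : ℝ) := by positivity
  have hconc := strictConcaveOn_sin_Icc.2 hx hy hne ha0 (by linarith : (0:ℝ) < 1 - a)
    (by ring)
  simp only [smul_eq_mul, Real.sin_zero, mul_zero, add_zero] at hconc
  have hsmul : a * (θb / 2) = t / 2 := by
    field_simp [ha]
    rw [ha]; field_simp
  rw [hsmul] at hconc
  -- hconc : a * sin (θb/2) < sin (t/2)
  have hsb : 0 < Real.sin (θb / 2) :=
    Real.sin_pos_of_pos_of_lt_pi (by linarith) (by linarith)
  have hlhs : 0 ≤ a * Real.sin (θb / 2) := by positivity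
  have hsq : (a * Real.sin (θb / 2)) ^ 2 < Real.sin (t / 2) ^ 2 := by
    exact pow_lt_pow_left₀ hconc hlhs (by norm_num)
  rw [one_sub_cos_eq t, one_sub_cos_eq θb]
  have hθb2 : (θb : ℝ) ^ 2 ≠ 0 := by positivity
  have : ((2 * Real.sin (θb / 2) ^ 2) / θb ^ 2) * t ^ 2
      = 2 * (a * Real.sin (θb / 2)) ^ 2 := by
    field_simp [ha]
    rw [ha]; field_simp
  rw [this]
  linarith

/-- Exact tightness of the quadratic upper envelope of cosine: for
`0 < θ̄ ≤ π/2`, the gap `g(θ) = 1 − ((1−cos θ̄)/θ̄²)θ² − cos θ` is nonnegative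
on `[−θ̄, θ̄]` and vanishes exactly at `θ ∈ {−θ̄, 0, θ̄}`. -/
theorem cos_quadratic_envelope_tightness (θb : ℝ)
    (hθb0 : 0 < θb) (hθbπ : θb ≤ Real.pi / 2) :
    ∀ θ ∈ Set.Icc (-θb) θb,
      0 ≤ 1 - ((1 - Real.cos θb) / θb ^ 2) * θ ^ 2 - Real.cos θ ∧
      (1 - ((1 - Real.cos θb) / θb ^ 2) * θ ^ 2 - Real.cos θ = 0 ↔
        θ = -θb ∨ θ = 0 ∨ θ = θb) := by
  intro θ hθ
  have hθb2 : (θb : ℝ) ^ 2 ≠ 0 := by positivity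
  have hend : 1 - ((1 - Real.cos θb) / θb ^ 2) * θb ^ 2 - Real.cos θb = 0 := by
    field_simp
    ring
  by_cases hcases : θ = -θb ∨ θ = 0 ∨ θ = θb
  · have hval : 1 - ((1 - Real.cos θb) / θb ^ 2) * θ ^ 2 - Real.cos θ = 0 := by
      rcases hcases with h | h | h <;> subst h
      · rw [Real.cos_neg, neg_pow]; simpa using hend
      · simp
      · exact hend
    exact ⟨hval.ge, ⟨fun _ => hcases, fun _ => hval⟩⟩
  · push_neg at hcases
    obtain ⟨h1, h2, h3⟩ := hcases
    have habs0 : 0 < |θ| := abs_pos.2 h2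
    have habsb : |θ| < θb := by
      rcases abs_cases θ with ⟨he, _⟩ | ⟨he, _⟩
      · rw [he]; exact lt_of_le_of_ne hθ.2 h3
      · rw [he]; have := hθ.1; rcases lt_or_eq_of_le this with h | h
        · linarith
        · exact absurd h.symm h1
    have hk := key_lt θb hθb0 hθbπ (|θ|) habs0 habsb
    rw [Real.cos_abs, sq_abs] at hk
    constructor
    · linarith
    · constructor
      · intro h; linarith
      · intro h; rcases h with h | h | h <;> exact absurd h (by assumption)
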